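/- arXiv:2210.09720 — 2 statements merged into one kernel-verified Lean document; each statement's English description precedes it below -/
import Mathlib

section
/- Let $E, F$ be Riesz spaces and $S, T : E \to F$ orthogonally additive operators. If for every $x \in E$ the infimum $R(x) = \inf\{S(u) + T(v) : x = u \sqcup v\}$ exists in $F$, then $S \wedge T$ exists in the ordered vector space of orthogonally additive operators and $(S \wedge T)(x) = R(x)$ for all $x$. -/
/-- Disjointness in a Riesz space: `|x| ⊓ |y| = 0`. -/
def RDisjoint {E : Type*} [Lattice E] [AddCommGroup E] (x y : E) : Prop :=
  |x| ⊓ |y| = 0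

/-- `x` is a fragment of `e` (lateral order `x ⊑ e`): `x ⊥ (e - x)`. -/
def IsFragment {E : Type*} [Lattice E] [AddCommGroup E] (x e : E) : Prop :=
  RDisjoint x (e - x)

/-- An orthogonally additive operator. -/
def IsOAO {E F : Type*} [Lattice E] [AddCommGroup E] [Lattice F] [AddCommGroup F]
    (T : E → F) : Prop :=
  ∀ x y : E, RDisjoint x y → T (x + y) = T x + T y

section Aux

variable {α : Type*} [Lattice α] [AddCommGroup α] [CovariantClass α α (· + ·) (· ≤ ·)]

/-- Subadditivity of the infimum for positive elements. -/
lemma aux_inf_add_le {a b c : α} (ha : 0 ≤ a) (hb : 0 ≤ b) (hc : 0 ≤ c) :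
    c ⊓ (a + b) ≤ c ⊓ a + c ⊓ b := by
  have key : c ⊓ (a + b) + -(c ⊓ a) = (c ⊓ (a + b) + -c) ⊔ (c ⊓ (a + b) + -a) := by
    rw [neg_inf, add_sup]
  rw [← sub_le_iff_le_add', sub_eq_add_neg, key]
  apply sup_le
  · have h0 : c ⊓ (a + b) + -c ≤ 0 := by
      rw [← sub_eq_add_neg, sub_nonpos]; exact inf_le_left
    exact le_trans h0 (le_inf hc hb)
  · apply le_inf
    · rw [← sub_eq_add_neg, sub_le_iff_le_add]
      exact le_trans inf_le_left (le_add_of_nonneg_right ha)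
    · rw [← sub_eq_add_neg, sub_le_iff_le_add, add_comm b a]
      exact inf_le_right

lemma rd_symm {x y : α} (h : RDisjoint x y) : RDisjoint y x := by
  rwa [RDisjoint, inf_comm]

lemma rd_zero (x : α) : RDisjoint x (0 : α) := by
  unfold RDisjoint
  rw [abs_zero]
  exact inf_eq_right.mpr (abs_nonneg x)

lemma rd_of_abs_le {u v x y : α} (hu : |u| ≤ |x|) (hv : |v| ≤ |y|) (h : RDisjoint x y) :
    RDisjoint u v :=
  le_antisymm (le_trans (inf_le_inf hu hv) h.le) (le_inf (abs_nonneg u) (abs_nonneg v))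

/-- Disjointness is additive on the right. -/
lemma rd_add_right {x u v : α} (h1 : RDisjoint x u) (h2 : RDisjoint x v) :
    RDisjoint x (u + v) := by
  unfold RDisjoint at *
  refine le_antisymm ?_ (le_inf (abs_nonneg x) (abs_nonneg _))
  calc |x| ⊓ |u + v| ≤ |x| ⊓ (|u| + |v|) := inf_le_inf_left _ (abs_add_le u v)
    _ ≤ |x| ⊓ |u| + |x| ⊓ |v| := aux_inf_add_le (abs_nonneg u) (abs_nonneg v) (abs_nonneg x)
    _ = 0 := by rw [h1, h2, add_zero]

lemma rd_add_add {a b c d : α} (hac : RDisjoint a c) (had : RDisjoint a d)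
    (hbc : RDisjoint b c) (hbd : RDisjoint b d) : RDisjoint (a + b) (c + d) :=
  rd_symm (rd_add_right (rd_symm (rd_add_right hac had)) (rd_symm (rd_add_right hbc hbd)))

/-- If `u ⊥ v` then `|u| ≤ |u + v|`. -/
lemma abs_le_abs_add_of_rd {u v : α} (h : RDisjoint u v) : |u| ≤ |u + v| := by
  have h1 : |u| ≤ |u + v| + |v| := by
    calc |u| = |u + v + -v| := (congrArg abs (add_neg_cancel_right u v)).symm
      _ ≤ |u + v| + |(-v)| := abs_add_le _ _
      _ = |u + v| + |v| := by rw [abs_neg]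
  calc |u| = |u| ⊓ (|u + v| + |v|) := (inf_eq_left.mpr h1).symm
    _ ≤ |u| ⊓ |u + v| + |u| ⊓ |v| :=
        aux_inf_add_le (abs_nonneg _) (abs_nonneg v) (abs_nonneg u)
    _ = |u| ⊓ |u + v| + 0 := by rw [h]
    _ ≤ |u + v| := by rw [add_zero]; exact inf_le_right

lemma disjoint_pos_add_le {p q a : α} (hpq : p ⊓ q = 0)
    (hpa : p ≤ a) (hqa : q ≤ a) : p + q ≤ a := by
  rw [← inf_add_sup p q, hpq, zero_add]
  exact sup_le hpa hqa

/-- Splitting an element dominated by a sum of two disjoint positive elements. -/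
lemma aux_split {a b : α} (hab : a ⊓ b = 0) (ha : 0 ≤ a) (hb : 0 ≤ b) (z : α)
    (hz : |z| ≤ a + b) :
    ∃ z₁ z₂ : α, z = z₁ + z₂ ∧ |z₁| ≤ a ∧ |z₂| ≤ b ∧ |z₁| ≤ |z| ∧ |z₂| ≤ |z| := by
  have hp0 : 0 ≤ z⁺ := posPart_nonneg z
  have hq0 : 0 ≤ z⁻ := negPart_nonneg z
  have hpq : z⁺ ⊓ z⁻ = 0 := posPart_inf_negPart_eq_zero z
  have hpab : z⁺ ≤ a + b :=
    le_trans (le_trans (le_add_of_nonneg_right hq0) (posPart_add_negPart z).le) hz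
  have hqab : z⁻ ≤ a + b :=
    le_trans (le_trans (le_add_of_nonneg_left hp0) (posPart_add_negPart z).le) hz
  have key : ∀ c : α, 0 ≤ c → c ≤ a + b → c = c ⊓ a + c ⊓ b := by
    intro c hc hcab
    refine le_antisymm ?_ ?_
    · calc c = c ⊓ (a + b) := (inf_eq_left.mpr hcab).symm
        _ ≤ c ⊓ a + c ⊓ b := aux_inf_add_le ha hb hc
    · refine disjoint_pos_add_le ?_ inf_le_left inf_le_left
      refine le_antisymm ?_ (le_inf (le_inf hc ha) (le_inf hc hb))
      calc (c ⊓ a) ⊓ (c ⊓ b) ≤ a ⊓ b := inf_le_inf inf_le_right inf_le_right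
        _ = 0 := hab
  have hdisj : ∀ s : α, 0 ≤ s → (z⁺ ⊓ s) ⊓ (z⁻ ⊓ s) = 0 := by
    intro s hs
    refine le_antisymm ?_ (le_inf (le_inf hp0 hs) (le_inf hq0 hs))
    calc (z⁺ ⊓ s) ⊓ (z⁻ ⊓ s) ≤ z⁺ ⊓ z⁻ := inf_le_inf inf_le_left inf_le_left
      _ = 0 := hpq
  have habs : ∀ s : α, 0 ≤ s → |z⁺ ⊓ s - z⁻ ⊓ s| ≤ z⁺ ⊓ s + z⁻ ⊓ s := by
    intro s hs
    calc |z⁺ ⊓ s - z⁻ ⊓ s| = |z⁺ ⊓ s + -(z⁻ ⊓ s)| := by rw [sub_eq_add_neg]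
      _ ≤ |z⁺ ⊓ s| + |(-(z⁻ ⊓ s))| := abs_add_le _ _
      _ = z⁺ ⊓ s + z⁻ ⊓ s := by
          rw [abs_neg, abs_of_nonneg (le_inf hp0 hs), abs_of_nonneg (le_inf hq0 hs)]
  refine ⟨z⁺ ⊓ a - z⁻ ⊓ a, z⁺ ⊓ b - z⁻ ⊓ b, ?_, ?_, ?_, ?_, ?_⟩
  · have harr : z⁺ ⊓ a - z⁻ ⊓ a + (z⁺ ⊓ b - z⁻ ⊓ b)
        = z⁺ ⊓ a + z⁺ ⊓ b - (z⁻ ⊓ a + z⁻ ⊓ b) := by abel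
    rw [harr, ← key z⁺ hp0 hpab, ← key z⁻ hq0 hqab, posPart_sub_negPart]
  · exact le_trans (habs a ha)
      (disjoint_pos_add_le (hdisj a ha) inf_le_right inf_le_right)
  · exact le_trans (habs b hb)
      (disjoint_pos_add_le (hdisj b hb) inf_le_right inf_le_right)
  · calc |z⁺ ⊓ a - z⁻ ⊓ a| ≤ z⁺ ⊓ a + z⁻ ⊓ a := habs a ha
      _ ≤ z⁺ + z⁻ := add_le_add inf_le_left inf_le_left
      _ = |z| := posPart_add_negPart z
  · calc |z⁺ ⊓ b - z⁻ ⊓ b| ≤ z⁺ ⊓ b + z⁻ ⊓ b := habs b hb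
      _ ≤ z⁺ + z⁻ := add_le_add inf_le_left inf_le_left
      _ = |z| := posPart_add_negPart z

/-- An element disjoint from `a` and dominated (in absolute value) by `a + (a + a)`
is zero. -/
lemma aux_zero_of_rd_le {w a : α} (ha : 0 ≤ a) (hd : |w| ⊓ a = 0)
    (hle : |w| ≤ a + (a + a)) : w = 0 := by
  have h0 : |w| ≤ 0 := by
    calc |w| = |w| ⊓ (a + (a + a)) := (inf_eq_left.mpr hle).symm
      _ ≤ |w| ⊓ a + |w| ⊓ (a + a) :=
          aux_inf_add_le ha (add_nonneg ha ha) (abs_nonneg w)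
      _ ≤ |w| ⊓ a + (|w| ⊓ a + |w| ⊓ a) :=
          add_le_add_right (aux_inf_add_le ha ha (abs_nonneg w)) _
      _ = 0 := by rw [hd]; simp
  have h1 : w ≤ 0 := le_trans (le_abs_self w) h0
  have h2 : -w ≤ 0 := le_trans (neg_le_abs w) h0
  exact le_antisymm h1 (neg_nonpos.mp h2)

/-- The key decomposition: if `x ⊥ y` and `u ⊥ v` with `u + v = x + y`, then `u` and `v`
split compatibly with `x` and `y`. -/
lemma aux_decomp {x y u v : α} (hxy : RDisjoint x y) (huv : RDisjoint u v)
    (heq : u + v = x + y) :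
    ∃ u₁ u₂ v₁ v₂ : α, u = u₁ + u₂ ∧ v = v₁ + v₂ ∧ x = u₁ + v₁ ∧ y = u₂ + v₂ ∧
      RDisjoint u₁ v₁ ∧ RDisjoint u₂ v₂ ∧ RDisjoint u₁ u₂ ∧ RDisjoint v₁ v₂ := by
  have ha : (0 : α) ≤ |x| := abs_nonneg x
  have hb : (0 : α) ≤ |y| := abs_nonneg y
  have hab : |x| ⊓ |y| = 0 := hxy
  have habs_xy : |x + y| ≤ |x| + |y| := abs_add_le x y
  have hu_le : |u| ≤ |x| + |y| := by
    calc |u| ≤ |u + v| := abs_le_abs_add_of_rd huv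
      _ = |x + y| := by rw [heq]
      _ ≤ |x| + |y| := habs_xy
  have hv_le : |v| ≤ |x| + |y| := by
    calc |v| ≤ |v + u| := abs_le_abs_add_of_rd (rd_symm huv)
      _ = |x + y| := by rw [add_comm, heq]
      _ ≤ |x| + |y| := habs_xy
  obtain ⟨u₁, u₂, hu12, hu1a, hu2b, hu1u, hu2u⟩ := aux_split hab ha hb u hu_le
  obtain ⟨v₁, v₂, hv12, hv1a, hv2b, hv1v, hv2v⟩ := aux_split hab ha hb v hv_le
  have hw1 : x - (u₁ + v₁) = u₂ + v₂ - y := by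
    rw [sub_eq_sub_iff_add_eq_add, ← heq, hu12, hv12]
    abel
  have hw_le_b : |x - (u₁ + v₁)| ≤ |y| + (|y| + |y|) := by
    rw [hw1]
    calc |u₂ + v₂ - y| = |u₂ + (v₂ + -y)| := by rw [sub_eq_add_neg, add_assoc]
      _ ≤ |u₂| + |v₂ + -y| := abs_add_le _ _
      _ ≤ |u₂| + (|v₂| + |(-y)|) := add_le_add_right (abs_add_le _ _) _
      _ = |u₂| + (|v₂| + |y|) := by rw [abs_neg]
      _ ≤ |y| + (|y| + |y|) := add_le_add hu2b (add_le_add_left hv2b _)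
  have hw_le_a : |x - (u₁ + v₁)| ≤ |x| + (|x| + |x|) := by
    calc |x - (u₁ + v₁)| = |x + (-u₁ + -v₁)| := by rw [sub_eq_add_neg, neg_add]
      _ ≤ |x| + |(-u₁) + -v₁| := abs_add_le _ _
      _ ≤ |x| + (|(-u₁)| + |(-v₁)|) := add_le_add_right (abs_add_le _ _) _
      _ = |x| + (|u₁| + |v₁|) := by rw [abs_neg, abs_neg]
      _ ≤ |x| + (|x| + |x|) := add_le_add_right (add_le_add hu1a hv1a) _
  have hw_d : |x - (u₁ + v₁)| ⊓ |y| = 0 := by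
    refine le_antisymm ?_ (le_inf (abs_nonneg _) hb)
    calc |x - (u₁ + v₁)| ⊓ |y| ≤ (|x| + (|x| + |x|)) ⊓ |y| := inf_le_inf_right _ hw_le_a
      _ = |y| ⊓ (|x| + (|x| + |x|)) := inf_comm _ _
      _ ≤ |y| ⊓ |x| + |y| ⊓ (|x| + |x|) := aux_inf_add_le ha (add_nonneg ha ha) hb
      _ ≤ |y| ⊓ |x| + (|y| ⊓ |x| + |y| ⊓ |x|) :=
          add_le_add_right (aux_inf_add_le ha ha hb) _
      _ = 0 := by rw [inf_comm |y| |x|, hab]; simp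
  have hw0 : x - (u₁ + v₁) = 0 := aux_zero_of_rd_le hb hw_d hw_le_b
  have hx : x = u₁ + v₁ := sub_eq_zero.mp hw0
  have hy : y = u₂ + v₂ := by
    have h' : u₂ + v₂ - y = 0 := by rw [← hw1]; exact hw0
    exact (sub_eq_zero.mp h').symm
  exact ⟨u₁, u₂, v₁, v₂, hu12, hv12, hx, hy,
    rd_of_abs_le hu1u hv1v huv, rd_of_abs_le hu2u hv2v huv,
    rd_of_abs_le hu1a hu2b hxy, rd_of_abs_le hv1a hv2b hxy⟩

end Aux

variable {E F : Type*}
  [Lattice E] [AddCommGroup E] [CovariantClass E E (· + ·) (· ≤ ·)]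
  [Lattice F] [AddCommGroup F] [CovariantClass F F (· + ·) (· ≤ ·)]

lemma aux_oao_zero {S : E → F} (hS : IsOAO S) : S 0 = 0 := by
  have h := hS 0 0 (rd_zero 0)
  rw [add_zero] at h
  exact (left_eq_add.mp h)

/-- If the pointwise infimum formula exists, it defines the meet `S ∧ T` of two OAOs
in the ordered vector space of all OAOs. -/
theorem oao_inf_exists (S T : E → F) (hS : IsOAO S) (hT : IsOAO T) (R : E → F)
    (hR : ∀ x : E,
      IsGLB {z : F | ∃ u v : E, RDisjoint u v ∧ x = u + v ∧ z = S u + T v} (R x)) :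
    IsOAO R ∧ (∀ x, R x ≤ S x) ∧ (∀ x, R x ≤ T x) ∧
    ∀ P : E → F, IsOAO P → (∀ x, P x ≤ S x) → (∀ x, P x ≤ T x) → ∀ x, P x ≤ R x := by
  have hS0 : S 0 = 0 := aux_oao_zero hS
  have hT0 : T 0 = 0 := aux_oao_zero hT
  refine ⟨?_, ?_, ?_, ?_⟩
  · -- R is orthogonally additive
    intro x y hxy
    apply le_antisymm
    · -- R (x + y) ≤ R x + R y
      rw [← sub_le_iff_le_add']
      apply (hR y).2
      rintro z ⟨u₂, v₂, hd2, hy2, rfl⟩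
      rw [sub_le_comm]
      apply (hR x).2
      rintro w ⟨u₁, v₁, hd1, hx1, rfl⟩
      rw [sub_le_iff_le_add]
      have habs_u1 : |u₁| ≤ |x| := by
        have h := abs_le_abs_add_of_rd hd1; rwa [← hx1] at h
      have habs_v1 : |v₁| ≤ |x| := by
        have h := abs_le_abs_add_of_rd (rd_symm hd1)
        rwa [add_comm, ← hx1] at h
      have habs_u2 : |u₂| ≤ |y| := by
        have h := abs_le_abs_add_of_rd hd2; rwa [← hy2] at h
      have habs_v2 : |v₂| ≤ |y| := by
        have h := abs_le_abs_add_of_rd (rd_symm hd2)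
        rwa [add_comm, ← hy2] at h
      have h12 : RDisjoint (u₁ + u₂) (v₁ + v₂) :=
        rd_add_add hd1 (rd_of_abs_le habs_u1 habs_v2 hxy)
          (rd_of_abs_le habs_u2 habs_v1 (rd_symm hxy)) hd2
      have hu12 : RDisjoint u₁ u₂ := rd_of_abs_le habs_u1 habs_u2 hxy
      have hv12 : RDisjoint v₁ v₂ := rd_of_abs_le habs_v1 habs_v2 hxy
      calc R (x + y) ≤ S (u₁ + u₂) + T (v₁ + v₂) :=
            (hR (x + y)).1 ⟨u₁ + u₂, v₁ + v₂, h12, by rw [hx1, hy2]; abel, rfl⟩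
        _ = S u₁ + T v₁ + (S u₂ + T v₂) := by
            rw [hS _ _ hu12, hT _ _ hv12]; abel
    · -- R x + R y ≤ R (x + y)
      apply (hR (x + y)).2
      rintro z ⟨u, v, huv, hxyuv, rfl⟩
      obtain ⟨u₁, u₂, v₁, v₂, hu, hv, hx, hy, d1, d2, du, dv⟩ :=
        aux_decomp hxy huv hxyuv.symm
      calc R x + R y ≤ S u₁ + T v₁ + (S u₂ + T v₂) :=
            add_le_add ((hR x).1 ⟨u₁, v₁, d1, hx, rfl⟩) ((hR y).1 ⟨u₂, v₂, d2, hy, rfl⟩)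
        _ = S u + T v := by rw [hu, hv, hS _ _ du, hT _ _ dv]; abel
  · intro x
    exact (hR x).1 ⟨x, 0, rd_zero x, (add_zero x).symm, by rw [hT0, add_zero]⟩
  · intro x
    exact (hR x).1 ⟨0, x, rd_symm (rd_zero x), (zero_add x).symm, by rw [hS0, zero_add]⟩
  · intro P hP hPS hPT x
    apply (hR x).2
    rintro z ⟨u, v, huv, hxuv, rfl⟩
    calc P x = P u + P v := by rw [hxuv, hP u v huv]
      _ ≤ S u + T v := add_le_add (hPS u) (hPT v)
end

section
/- Let $E, F$ be Riesz spaces and $T : E \to F$ an orthogonally additive operator. If for every $x \in E$ the supremum $R(x) = \sup\{T(u) : u \sqsubseteq x\}$ over all fragments $u$ of $x$ exists in $F$, then the positive part $T^+ = T \vee 0$ exists in the ordered vector space of orthogonally additive operators and $T^+(x) = R(x)$ for all $x \in E$. -/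
section Helpers

variable {α : Type*} [Lattice α] [AddCommGroup α] [CovariantClass α α (· + ·) (· ≤ ·)]

lemma posPart_le_abs' (a : α) : a⁺ ≤ |a| := by
  rw [← posPart_add_negPart a]
  exact le_add_of_nonneg_right (negPart_nonneg a)

lemma negPart_le_abs' (a : α) : a⁻ ≤ |a| := by
  rw [← posPart_add_negPart a]
  exact le_add_of_nonneg_left (posPart_nonneg a)

/-- Monotonicity of disjointness for nonnegative elements. -/
lemma inf_zero_mono {a e a' e' : α} (ha' : 0 ≤ a') (he' : 0 ≤ e')
    (haa : a' ≤ a) (hee : e' ≤ e) (h : a ⊓ e = 0) : a' ⊓ e' = 0 :=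
  le_antisymm (h ▸ inf_le_inf haa hee) (le_inf ha' he')

/-- Subadditivity of the infimum for nonnegative elements. -/
lemma add_inf_le_of_nonneg {a b e : α} (ha : 0 ≤ a) (hb : 0 ≤ b) (he : 0 ≤ e) :
    (a + b) ⊓ e ≤ a ⊓ e + b ⊓ e := by
  rw [← sub_le_iff_le_add']
  refine le_inf ?_ ?_
  · rw [sub_inf]
    refine sup_le ?_ ?_
    · rw [sub_le_iff_le_add']; exact inf_le_left
    · exact (sub_nonpos.mpr inf_le_right).trans hb
  · exact (sub_le_self _ (le_inf ha he)).trans inf_le_right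

lemma add_inf_zero {a b e : α} (ha : 0 ≤ a) (hb : 0 ≤ b) (he : 0 ≤ e)
    (h1 : a ⊓ e = 0) (h2 : b ⊓ e = 0) : (a + b) ⊓ e = 0 := by
  refine le_antisymm ?_ (le_inf (add_nonneg ha hb) he)
  calc (a + b) ⊓ e ≤ a ⊓ e + b ⊓ e := add_inf_le_of_nonneg ha hb he
    _ = 0 := by rw [h1, h2, add_zero]

lemma inf_add_zero {a b e : α} (ha : 0 ≤ a) (hb : 0 ≤ b) (he : 0 ≤ e)
    (h1 : e ⊓ a = 0) (h2 : e ⊓ b = 0) : e ⊓ (a + b) = 0 := by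
  rw [inf_comm]
  exact add_inf_zero ha hb he (by rwa [inf_comm]) (by rwa [inf_comm])

lemma inf4_zero {a b c d : α} (ha : 0 ≤ a) (hb : 0 ≤ b) (hc : 0 ≤ c) (hd : 0 ≤ d)
    (hac : a ⊓ c = 0) (had : a ⊓ d = 0) (hbc : b ⊓ c = 0) (hbd : b ⊓ d = 0) :
    (a + b) ⊓ (c + d) = 0 :=
  add_inf_zero ha hb (add_nonneg hc hd)
    (inf_add_zero hc hd ha hac had) (inf_add_zero hc hd hb hbc hbd)

/-- For disjoint nonneg `b c`, the infimum with nonneg `a` is additive. -/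
lemma inf_add_of_disjoint {a b c : α} (ha : 0 ≤ a) (hb : 0 ≤ b) (hc : 0 ≤ c)
    (hbc : b ⊓ c = 0) : a ⊓ (b + c) = a ⊓ b + a ⊓ c := by
  refine le_antisymm ?_ ?_
  · rw [inf_comm a (b + c), inf_comm a b, inf_comm a c]
    exact add_inf_le_of_nonneg hb hc ha
  · have h0 : (a ⊓ b) ⊓ (a ⊓ c) = 0 :=
      le_antisymm ((inf_le_inf inf_le_right inf_le_right).trans hbc.le)
        (le_inf (le_inf ha hb) (le_inf ha hc))
    calc a ⊓ b + a ⊓ c = (a ⊓ b) ⊓ (a ⊓ c) + ((a ⊓ b) ⊔ (a ⊓ c)) := (inf_add_sup _ _).symm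
      _ = (a ⊓ b) ⊔ (a ⊓ c) := by rw [h0, zero_add]
      _ ≤ a ⊓ (b + c) := sup_le
          (inf_le_inf le_rfl (le_add_of_nonneg_right hc))
          (inf_le_inf le_rfl (le_add_of_nonneg_left hb))

/-- For disjoint elements, the absolute value is additive. -/
lemma abs_add_of_rdisjoint {a b : α} (h : |a| ⊓ |b| = 0) : |a + b| = |a| + |b| := by
  have key : ∀ u v : α, |u| ⊓ |v| = 0 → |u| ≤ |u + v| := by
    intro u v huv
    have t : |u| ≤ |u + v| + |v| := by
      have := abs_add_le (u + v) (-v)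
      simpa using this
    have : |u| - |u + v| ≤ |u| ⊓ |v| :=
      le_inf (sub_le_self _ (abs_nonneg _)) (by rwa [sub_le_iff_le_add'])
    rw [huv] at this
    exact sub_nonpos.mp this
  have h1 : |a| ≤ |a + b| := key a b h
  have h2 : |b| ≤ |a + b| := by
    rw [add_comm]
    exact key b a (by rwa [inf_comm])
  refine le_antisymm (abs_add_le a b) ?_
  calc |a| + |b| = |a| ⊓ |b| + (|a| ⊔ |b|) := (inf_add_sup _ _).symm
    _ = |a| ⊔ |b| := by rw [h, zero_add]
    _ ≤ |a + b| := sup_le h1 h2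

/-- Uniqueness of the decomposition into disjoint positive and negative parts. -/
lemma posPart_negPart_unique {p q : α} (hp : 0 ≤ p) (hq : 0 ≤ q) (hpq : p ⊓ q = 0) :
    (p - q)⁺ = p ∧ (p - q)⁻ = q := by
  have hsup : p ⊔ q = p + q := by
    have := inf_add_sup p q
    rw [hpq, zero_add] at this
    exact this
  have hpos : (p - q)⁺ = p := by
    rw [posPart_def]
    calc (p - q) ⊔ 0 = (p - q) ⊔ (q - q) := by rw [sub_self]
      _ = (p ⊔ q) - q := (sup_sub p q q).symm
      _ = (p + q) - q := by rw [hsup]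
      _ = p := add_sub_cancel_right p q
  refine ⟨hpos, ?_⟩
  have h' := posPart_sub_negPart (p - q)
  rw [hpos] at h'
  exact sub_right_inj.mp h'

/-- Disjoint elements have additive positive and negative parts. -/
lemma posPart_negPart_add_of_rdisjoint {a b : α} (h : |a| ⊓ |b| = 0) :
    (a + b)⁺ = a⁺ + b⁺ ∧ (a + b)⁻ = a⁻ + b⁻ := by
  have hp : 0 ≤ a⁺ + b⁺ := add_nonneg (posPart_nonneg a) (posPart_nonneg b)
  have hq : 0 ≤ a⁻ + b⁻ := add_nonneg (negPart_nonneg a) (negPart_nonneg b)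
  have hab : |b| ⊓ |a| = 0 := by rwa [inf_comm]
  have hpq : (a⁺ + b⁺) ⊓ (a⁻ + b⁻) = 0 :=
    inf4_zero (posPart_nonneg a) (posPart_nonneg b) (negPart_nonneg a) (negPart_nonneg b)
      (posPart_inf_negPart_eq_zero a)
      (inf_zero_mono (posPart_nonneg a) (negPart_nonneg b)
        (posPart_le_abs' a) (negPart_le_abs' b) h)
      (inf_zero_mono (posPart_nonneg b) (negPart_nonneg a)
        (posPart_le_abs' b) (negPart_le_abs' a) hab)
      (posPart_inf_negPart_eq_zero b)
  have heq : (a⁺ + b⁺) - (a⁻ + b⁻) = a + b := by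
    rw [show (a⁺ + b⁺) - (a⁻ + b⁻) = (a⁺ - a⁻) + (b⁺ - b⁻) by abel,
      posPart_sub_negPart, posPart_sub_negPart]
  have := posPart_negPart_unique hp hq hpq
  rw [heq] at this
  exact this

end Helpers

section Fragments

variable {E : Type*} [Lattice E] [AddCommGroup E] [CovariantClass E E (· + ·) (· ≤ ·)]

lemma isFragment_zero (x : E) : IsFragment 0 x := by
  unfold IsFragment RDisjoint
  rw [abs_zero, sub_zero]
  exact inf_eq_left.mpr (abs_nonneg x)

lemma isFragment_self (x : E) : IsFragment x x := by
  unfold IsFragment RDisjoint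
  rw [sub_self, abs_zero]
  exact inf_eq_right.mpr (abs_nonneg x)

lemma IsFragment.abs_eq {u x : E} (h : IsFragment u x) : |x| = |u| + |x - u| := by
  have := abs_add_of_rdisjoint (h : |u| ⊓ |x - u| = 0)
  rwa [add_sub_cancel] at this

lemma IsFragment.abs_le {u x : E} (h : IsFragment u x) : |u| ≤ |x| := by
  rw [h.abs_eq]
  exact le_add_of_nonneg_right (abs_nonneg _)

/-- Fragments of disjoint elements are disjoint, and their sum is a fragment of the sum. -/
lemma isFragment_add {v w x y : E} (hv : IsFragment v x) (hw : IsFragment w y)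
    (hxy : RDisjoint x y) : RDisjoint v w ∧ IsFragment (v + w) (x + y) := by
  have hvx : |v| ≤ |x| := hv.abs_le
  have hwy : |w| ≤ |y| := hw.abs_le
  have hvw : RDisjoint v w :=
    inf_zero_mono (abs_nonneg v) (abs_nonneg w) hvx hwy hxy
  refine ⟨hvw, ?_⟩
  unfold IsFragment RDisjoint
  have hrw : x + y - (v + w) = (x - v) + (y - w) := by abel
  rw [hrw]
  have hvyw : |v| ⊓ |y - w| = 0 := by
    have h1 : |v| ⊓ (|y| + |w|) = 0 :=
      inf_add_zero (abs_nonneg y) (abs_nonneg w) (abs_nonneg v)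
        (inf_zero_mono (abs_nonneg v) (abs_nonneg y) hvx le_rfl hxy) hvw
    exact inf_zero_mono (abs_nonneg v) (abs_nonneg _) le_rfl
      (by simpa [← sub_eq_add_neg] using abs_add_le y (-w)) h1
  have hwxv : |w| ⊓ |x - v| = 0 := by
    have hyx : RDisjoint y x := by unfold RDisjoint at hxy ⊢; rwa [inf_comm]
    have hwv : |w| ⊓ |v| = 0 := by unfold RDisjoint at hvw; rwa [inf_comm]
    have h1 : |w| ⊓ (|x| + |v|) = 0 :=
      inf_add_zero (abs_nonneg x) (abs_nonneg v) (abs_nonneg w)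
        (inf_zero_mono (abs_nonneg w) (abs_nonneg x) hwy le_rfl hyx) hwv
    exact inf_zero_mono (abs_nonneg w) (abs_nonneg _) le_rfl
      (by simpa [← sub_eq_add_neg] using abs_add_le x (-v)) h1
  have big : (|v| + |w|) ⊓ (|x - v| + |y - w|) = 0 :=
    inf4_zero (abs_nonneg v) (abs_nonneg w) (abs_nonneg _) (abs_nonneg _)
      hv hvyw hwxv hw
  exact inf_zero_mono (abs_nonneg _) (abs_nonneg _)
    (abs_add_le v w) (abs_add_le _ _) big

/-- A fragment of a sum of disjoint elements splits into fragments. -/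
lemma isFragment_split {u x y : E} (hxy : RDisjoint x y) (hu : IsFragment u (x + y)) :
    ∃ v w : E, IsFragment v x ∧ IsFragment w y ∧ RDisjoint v w ∧ u = v + w := by
  set r := x + y - u with hr
  have hur : |u| ⊓ |r| = 0 := hu
  have hsum : u + r = x + y := by rw [hr]; abel
  have hSur : (x + y)⁺ = u⁺ + r⁺ ∧ (x + y)⁻ = u⁻ + r⁻ := by
    rw [← hsum]; exact posPart_negPart_add_of_rdisjoint hur
  have hSxy : (x + y)⁺ = x⁺ + y⁺ ∧ (x + y)⁻ = x⁻ + y⁻ :=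
    posPart_negPart_add_of_rdisjoint hxy
  have hxpyp : x⁺ ⊓ y⁺ = 0 :=
    inf_zero_mono (posPart_nonneg x) (posPart_nonneg y)
      (posPart_le_abs' x) (posPart_le_abs' y) hxy
  have hxnyn : x⁻ ⊓ y⁻ = 0 :=
    inf_zero_mono (negPart_nonneg x) (negPart_nonneg y)
      (negPart_le_abs' x) (negPart_le_abs' y) hxy
  -- u⁺ ≤ x⁺ + y⁺, u⁻ ≤ x⁻ + y⁻
  have hup : u⁺ ≤ x⁺ + y⁺ := by
    rw [← hSxy.1, hSur.1]; exact le_add_of_nonneg_right (posPart_nonneg r)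
  have hun : u⁻ ≤ x⁻ + y⁻ := by
    rw [← hSxy.2, hSur.2]; exact le_add_of_nonneg_right (negPart_nonneg r)
  set v : E := u⁺ ⊓ x⁺ - u⁻ ⊓ x⁻ with hv
  set w : E := u⁺ ⊓ y⁺ - u⁻ ⊓ y⁻ with hw
  -- u = v + w
  have hupsplit : u⁺ = u⁺ ⊓ x⁺ + u⁺ ⊓ y⁺ := by
    have h := inf_eq_left.mpr hup
    rw [inf_add_of_disjoint (posPart_nonneg u) (posPart_nonneg x)
      (posPart_nonneg y) hxpyp] at h
    exact h.symm
  have hunsplit : u⁻ = u⁻ ⊓ x⁻ + u⁻ ⊓ y⁻ := by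
    have h := inf_eq_left.mpr hun
    rw [inf_add_of_disjoint (negPart_nonneg u) (negPart_nonneg x)
      (negPart_nonneg y) hxnyn] at h
    exact h.symm
  have huvw : u = v + w := by
    have h1 : u = u⁺ - u⁻ := (posPart_sub_negPart u).symm
    rw [h1, hupsplit, hunsplit, hv, hw]; abel
  -- bounds on |v|, |w|
  have habs_le : ∀ p q : E, 0 ≤ p → 0 ≤ q → |p - q| ≤ p + q := by
    intro p q hp hq
    calc |p - q| ≤ |p| + |q| := by simpa [← sub_eq_add_neg] using abs_add_le p (-q)
      _ = p + q := by rw [abs_of_nonneg hp, abs_of_nonneg hq]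
  have hvabs : |v| ≤ x⁺ + x⁻ := by
    refine (habs_le _ _ (le_inf (posPart_nonneg u) (posPart_nonneg x))
      (le_inf (negPart_nonneg u) (negPart_nonneg x))).trans ?_
    exact add_le_add inf_le_right inf_le_right
  have hwabs : |w| ≤ y⁺ + y⁻ := by
    refine (habs_le _ _ (le_inf (posPart_nonneg u) (posPart_nonneg y))
      (le_inf (negPart_nonneg u) (negPart_nonneg y))).trans ?_
    exact add_le_add inf_le_right inf_le_right
  have hxabs : x⁺ + x⁻ = |x| := posPart_add_negPart x
  have hyabs : y⁺ + y⁻ = |y| := posPart_add_negPart y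
  have hvw : RDisjoint v w :=
    inf_zero_mono (abs_nonneg v) (abs_nonneg w)
      (hvabs.trans_eq hxabs) (hwabs.trans_eq hyabs) hxy
  -- A := u⁺ ⊓ x⁺, etc.
  have hAA' : (u⁺ ⊓ x⁺) ⊓ (x⁺ - u⁺ ⊓ x⁺) = 0 := by
    have hA' : x⁺ - u⁺ ⊓ x⁺ ≤ r⁺ := by
      have h1 : x⁺ - u⁺ ≤ r⁺ := by
        rw [sub_le_iff_le_add]
        calc x⁺ ≤ x⁺ + y⁺ := le_add_of_nonneg_right (posPart_nonneg y)
          _ = u⁺ + r⁺ := by rw [← hSxy.1, hSur.1]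
          _ = r⁺ + u⁺ := by abel
      rw [sub_inf]
      exact sup_le h1 (by simpa using posPart_nonneg r)
    have hur' : u⁺ ⊓ r⁺ = 0 :=
      inf_zero_mono (posPart_nonneg u) (posPart_nonneg r)
        (posPart_le_abs' u) (posPart_le_abs' r) hur
    exact inf_zero_mono (le_inf (posPart_nonneg u) (posPart_nonneg x))
      (by rw [sub_nonneg]; exact inf_le_right)
      inf_le_left hA' hur'
  have hBB' : (u⁻ ⊓ x⁻) ⊓ (x⁻ - u⁻ ⊓ x⁻) = 0 := by
    have hB' : x⁻ - u⁻ ⊓ x⁻ ≤ r⁻ := by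
      have h1 : x⁻ - u⁻ ≤ r⁻ := by
        rw [sub_le_iff_le_add]
        calc x⁻ ≤ x⁻ + y⁻ := le_add_of_nonneg_right (negPart_nonneg y)
          _ = u⁻ + r⁻ := by rw [← hSxy.2, hSur.2]
          _ = r⁻ + u⁻ := by abel
      rw [sub_inf]
      exact sup_le h1 (by simpa using negPart_nonneg r)
    have hur' : u⁻ ⊓ r⁻ = 0 :=
      inf_zero_mono (negPart_nonneg u) (negPart_nonneg r)
        (negPart_le_abs' u) (negPart_le_abs' r) hur
    exact inf_zero_mono (le_inf (negPart_nonneg u) (negPart_nonneg x))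
      (by rw [sub_nonneg]; exact inf_le_right)
      inf_le_left hB' hur'
  have hfragv : IsFragment v x := by
    unfold IsFragment RDisjoint
    have hx' : x = x⁺ - x⁻ := (posPart_sub_negPart x).symm
    have hxv : x - v = (x⁺ - u⁺ ⊓ x⁺) - (x⁻ - u⁻ ⊓ x⁻) := by
      conv_lhs => rw [hx', hv]
      abel
    have hA : (0 : E) ≤ u⁺ ⊓ x⁺ := le_inf (posPart_nonneg u) (posPart_nonneg x)
    have hB : (0 : E) ≤ u⁻ ⊓ x⁻ := le_inf (negPart_nonneg u) (negPart_nonneg x)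
    have hA' : (0 : E) ≤ x⁺ - u⁺ ⊓ x⁺ := by rw [sub_nonneg]; exact inf_le_right
    have hB' : (0 : E) ≤ x⁻ - u⁻ ⊓ x⁻ := by rw [sub_nonneg]; exact inf_le_right
    have hxpn : x⁺ ⊓ x⁻ = 0 := posPart_inf_negPart_eq_zero x
    have hxnp : x⁻ ⊓ x⁺ = 0 := by rwa [inf_comm]
    have big : (u⁺ ⊓ x⁺ + u⁻ ⊓ x⁻) ⊓ ((x⁺ - u⁺ ⊓ x⁺) + (x⁻ - u⁻ ⊓ x⁻)) = 0 :=
      inf4_zero hA hB hA' hB' hAA'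
        (inf_zero_mono hA hB' inf_le_right (sub_le_self _ hB) hxpn)
        (inf_zero_mono hB hA' inf_le_right (sub_le_self _ hA) hxnp)
        hBB'
    refine inf_zero_mono (abs_nonneg _) (abs_nonneg _) ?_ ?_ big
    · exact habs_le _ _ hA hB
    · rw [hxv]; exact habs_le _ _ hA' hB'
  -- IsFragment w y (symmetric)
  have hCC' : (u⁺ ⊓ y⁺) ⊓ (y⁺ - u⁺ ⊓ y⁺) = 0 := by
    have hC' : y⁺ - u⁺ ⊓ y⁺ ≤ r⁺ := by
      have h1 : y⁺ - u⁺ ≤ r⁺ := by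
        rw [sub_le_iff_le_add]
        calc y⁺ ≤ x⁺ + y⁺ := le_add_of_nonneg_left (posPart_nonneg x)
          _ = u⁺ + r⁺ := by rw [← hSxy.1, hSur.1]
          _ = r⁺ + u⁺ := by abel
      rw [sub_inf]
      exact sup_le h1 (by simpa using posPart_nonneg r)
    have hur' : u⁺ ⊓ r⁺ = 0 :=
      inf_zero_mono (posPart_nonneg u) (posPart_nonneg r)
        (posPart_le_abs' u) (posPart_le_abs' r) hur
    exact inf_zero_mono (le_inf (posPart_nonneg u) (posPart_nonneg y))
      (by rw [sub_nonneg]; exact inf_le_right)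
      inf_le_left hC' hur'
  have hDD' : (u⁻ ⊓ y⁻) ⊓ (y⁻ - u⁻ ⊓ y⁻) = 0 := by
    have hD' : y⁻ - u⁻ ⊓ y⁻ ≤ r⁻ := by
      have h1 : y⁻ - u⁻ ≤ r⁻ := by
        rw [sub_le_iff_le_add]
        calc y⁻ ≤ x⁻ + y⁻ := le_add_of_nonneg_left (negPart_nonneg x)
          _ = u⁻ + r⁻ := by rw [← hSxy.2, hSur.2]
          _ = r⁻ + u⁻ := by abel
      rw [sub_inf]
      exact sup_le h1 (by simpa using negPart_nonneg r)
    have hur' : u⁻ ⊓ r⁻ = 0 :=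
      inf_zero_mono (negPart_nonneg u) (negPart_nonneg r)
        (negPart_le_abs' u) (negPart_le_abs' r) hur
    exact inf_zero_mono (le_inf (negPart_nonneg u) (negPart_nonneg y))
      (by rw [sub_nonneg]; exact inf_le_right)
      inf_le_left hD' hur'
  have hfragw : IsFragment w y := by
    unfold IsFragment RDisjoint
    have hy' : y = y⁺ - y⁻ := (posPart_sub_negPart y).symm
    have hyw : y - w = (y⁺ - u⁺ ⊓ y⁺) - (y⁻ - u⁻ ⊓ y⁻) := by
      conv_lhs => rw [hy', hw]
      abel
    have hC : (0 : E) ≤ u⁺ ⊓ y⁺ := le_inf (posPart_nonneg u) (posPart_nonneg y)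
    have hD : (0 : E) ≤ u⁻ ⊓ y⁻ := le_inf (negPart_nonneg u) (negPart_nonneg y)
    have hC' : (0 : E) ≤ y⁺ - u⁺ ⊓ y⁺ := by rw [sub_nonneg]; exact inf_le_right
    have hD' : (0 : E) ≤ y⁻ - u⁻ ⊓ y⁻ := by rw [sub_nonneg]; exact inf_le_right
    have hypn : y⁺ ⊓ y⁻ = 0 := posPart_inf_negPart_eq_zero y
    have hynp : y⁻ ⊓ y⁺ = 0 := by rwa [inf_comm]
    have big : (u⁺ ⊓ y⁺ + u⁻ ⊓ y⁻) ⊓ ((y⁺ - u⁺ ⊓ y⁺) + (y⁻ - u⁻ ⊓ y⁻)) = 0 :=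
      inf4_zero hC hD hC' hD' hCC'
        (inf_zero_mono hC hD' inf_le_right (sub_le_self _ hD) hypn)
        (inf_zero_mono hD hC' inf_le_right (sub_le_self _ hC) hynp)
        hDD'
    refine inf_zero_mono (abs_nonneg _) (abs_nonneg _) ?_ ?_ big
    · exact habs_le _ _ hC hD
    · rw [hyw]; exact habs_le _ _ hC' hD'
  exact ⟨v, w, hfragv, hfragw, hvw, huvw⟩

end Fragments

variable {E F : Type*}
  [Lattice E] [AddCommGroup E] [CovariantClass E E (· + ·) (· ≤ ·)]
  [Lattice F] [AddCommGroup F] [CovariantClass F F (· + ·) (· ≤ ·)]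

/-- If `R x = sup {T u : u ⊑ x}` exists for all `x`, then `R = T⁺ = T ∨ 0` in the
ordered vector space of OAOs. -/
theorem oao_posPart_exists (T : E → F) (hT : IsOAO T) (R : E → F)
    (hR : ∀ x : E, IsLUB {z : F | ∃ u : E, IsFragment u x ∧ z = T u} (R x)) :
    IsOAO R ∧ (∀ x, T x ≤ R x) ∧ (∀ x, 0 ≤ R x) ∧
    ∀ P : E → F, IsOAO P → (∀ x, T x ≤ P x) → (∀ x, 0 ≤ P x) → ∀ x, R x ≤ P x := by
  have hT0 : T 0 = 0 := by
    have h0 : RDisjoint (0 : E) 0 := by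
      unfold RDisjoint; rw [abs_zero, inf_idem]
    have := hT 0 0 h0
    rw [add_zero] at this
    exact (left_eq_add.mp this)
  have hTR : ∀ x, T x ≤ R x := fun x =>
    (hR x).1 ⟨x, isFragment_self x, rfl⟩
  have hR0 : ∀ x, 0 ≤ R x := fun x => by
    have := (hR x).1 ⟨0, isFragment_zero x, rfl⟩
    rwa [hT0] at this
  refine ⟨?_, hTR, hR0, ?_⟩
  · -- R is orthogonally additive
    intro x y hxy
    have hub : R x + R y ∈ upperBounds {z : F | ∃ u : E, IsFragment u (x + y) ∧ z = T u} := by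
      rintro z ⟨u, hu, rfl⟩
      obtain ⟨v, w, hvx, hwy, hvw, rfl⟩ := isFragment_split hxy hu
      rw [hT v w hvw]
      exact add_le_add ((hR x).1 ⟨v, hvx, rfl⟩) ((hR y).1 ⟨w, hwy, rfl⟩)
    have hlub : IsLUB {z : F | ∃ u : E, IsFragment u (x + y) ∧ z = T u} (R x + R y) := by
      refine ⟨hub, ?_⟩
      intro c hc
      have hy' : ∀ w : E, IsFragment w y → R x ≤ c - T w := by
        intro w hwy
        refine (hR x).2 ?_
        rintro z ⟨v, hvx, rfl⟩
        obtain ⟨hvw, hfrag⟩ := isFragment_add hvx hwy hxy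
        have : T v + T w ≤ c := by
          rw [← hT v w hvw]
          exact hc ⟨v + w, hfrag, rfl⟩
        rwa [le_sub_iff_add_le]
      have hRy : R y + R x ≤ c := by
        rw [← le_sub_iff_add_le]
        refine (hR y).2 ?_
        rintro z ⟨w, hwy, rfl⟩
        rw [le_sub_iff_add_le]
        have h2 := hy' w hwy
        rw [le_sub_iff_add_le] at h2
        rwa [add_comm] at h2
      rwa [add_comm] at hRy
    exact (hR (x + y)).unique hlub
  · -- minimality
    intro P hP hTP hP0 x
    refine (hR x).2 ?_
    rintro z ⟨u, hu, rfl⟩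
    have hsum : u + (x - u) = x := by abel
    have hPx := hP u (x - u) hu
    rw [hsum] at hPx
    calc T u ≤ P u := hTP u
      _ ≤ P u + P (x - u) := le_add_of_nonneg_right (hP0 _)
      _ = P x := hPx.symm
end
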